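/- Let X be a real Banach space of dimension at least 2. If (2·L_X(t) − 1)/(1 − 2t) → 0 as t → (1/2)⁻, then X is uniformly smooth, i.e. ρ_X(s)/s → 0 as s → 0⁺. -/

import Mathlib

/-- The geometric constant L_X(t) defined via isosceles orthogonality. -/
noncomputable def LX (X : Type*) [NormedAddCommGroup X] [NormedSpace ℝ X] (t : ℝ) : ℝ :=
  sSup {r : ℝ | ∃ x y : X, (x, y) ≠ (0, 0) ∧ ‖x + y‖ = ‖x - y‖ ∧
    r = (‖t • x + (1 - t) • y‖ ^ 2 + ‖(1 - t) • x + t • y‖ ^ 2) / ‖x + y‖ ^ 2}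

/-- The modulus of smoothness. -/
noncomputable def rhoX (X : Type*) [NormedAddCommGroup X] [NormedSpace ℝ X] (s : ℝ) : ℝ :=
  sSup {r : ℝ | ∃ x y : X, ‖x‖ = 1 ∧ ‖y‖ = 1 ∧ r = (‖x + s • y‖ + ‖x - s • y‖) / 2 - 1}

open Filter Set

section aux
variable {X : Type*} [NormedAddCommGroup X] [NormedSpace ℝ X]

lemma aux_norm_x_le {x y : X} (h : ‖x + y‖ = ‖x - y‖) : ‖x‖ ≤ ‖x + y‖ := by
  have h1 : (2:ℝ) * ‖x‖ = ‖(x + y) + (x - y)‖ := by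
    rw [show (x + y) + (x - y) = (2:ℝ) • x by module, norm_smul]
    norm_num
  have h2 := norm_add_le (x + y) (x - y)
  linarith [h ▸ h2, h1 ▸ h2]

lemma aux_norm_y_le {x y : X} (h : ‖x + y‖ = ‖x - y‖) : ‖y‖ ≤ ‖x + y‖ := by
  have h1 : (2:ℝ) * ‖y‖ = ‖(x + y) - (x - y)‖ := by
    rw [show (x + y) - (x - y) = (2:ℝ) • y by module, norm_smul]
    norm_num
  have h2 := norm_sub_le (x + y) (x - y)
  linarith [h1 ▸ h2, h ▸ h2]

lemma LX_mem_le {t r : ℝ}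
    (hr : r ∈ {r : ℝ | ∃ x y : X, (x, y) ≠ (0, 0) ∧ ‖x + y‖ = ‖x - y‖ ∧
      r = (‖t • x + (1 - t) • y‖ ^ 2 + ‖(1 - t) • x + t • y‖ ^ 2) / ‖x + y‖ ^ 2}) :
    r ≤ 2 * (|t| + |1 - 2*t|)^2 := by
  obtain ⟨x, y, hxy, hiso, rfl⟩ := hr
  rcases eq_or_ne (x + y) 0 with hne | hne
  · -- then x = y = 0, contradiction
    have hsub : x - y = 0 := by
      have := hiso
      rw [hne, norm_zero] at this
      exact norm_eq_zero.mp this.symm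
    have hx : x = 0 := by
      have h2 : (2:ℝ) • x = 0 := by rw [show (2:ℝ) • x = (x + y) + (x - y) by module, hne, hsub, add_zero]
      have := smul_eq_zero.mp h2
      simpa using this
    have hy : y = 0 := by
      have h2 : (2:ℝ) • y = 0 := by rw [show (2:ℝ) • y = (x + y) - (x - y) by module, hne, hsub, sub_zero]
      have := smul_eq_zero.mp h2
      simpa using this
    exact absurd (by simp [hx, hy]) hxy
  · have hcpos : 0 < ‖x + y‖ := norm_pos_iff.mpr hne
    set c := ‖x + y‖ with hc
    have hxc : ‖x‖ ≤ c := aux_norm_x_le hiso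
    have hyc : ‖y‖ ≤ c := aux_norm_y_le hiso
    have hA : ‖t • x + (1 - t) • y‖ ≤ (|t| + |1 - 2*t|) * c := by
      calc ‖t • x + (1 - t) • y‖ = ‖t • (x + y) + (1 - 2*t) • y‖ := by
            rw [show t • x + (1 - t) • y = t • (x + y) + (1 - 2*t) • y by module]
        _ ≤ ‖t • (x + y)‖ + ‖(1 - 2*t) • y‖ := norm_add_le _ _
        _ = |t| * c + |1 - 2*t| * ‖y‖ := by rw [norm_smul, norm_smul]; simp [Real.norm_eq_abs, hc]
        _ ≤ |t| * c + |1 - 2*t| * c := by gcongr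
        _ = (|t| + |1 - 2*t|) * c := by ring
    have hB : ‖(1 - t) • x + t • y‖ ≤ (|t| + |1 - 2*t|) * c := by
      calc ‖(1 - t) • x + t • y‖ = ‖t • (x + y) + (1 - 2*t) • x‖ := by
            rw [show (1 - t) • x + t • y = t • (x + y) + (1 - 2*t) • x by module]
        _ ≤ ‖t • (x + y)‖ + ‖(1 - 2*t) • x‖ := norm_add_le _ _
        _ = |t| * c + |1 - 2*t| * ‖x‖ := by rw [norm_smul, norm_smul]; simp [Real.norm_eq_abs, hc]
        _ ≤ |t| * c + |1 - 2*t| * c := by gcongr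
        _ = (|t| + |1 - 2*t|) * c := by ring
    have hA2 : ‖t • x + (1 - t) • y‖ ^ 2 ≤ ((|t| + |1 - 2*t|) * c) ^ 2 :=
      pow_le_pow_left₀ (norm_nonneg _) hA 2
    have hB2 : ‖(1 - t) • x + t • y‖ ^ 2 ≤ ((|t| + |1 - 2*t|) * c) ^ 2 :=
      pow_le_pow_left₀ (norm_nonneg _) hB 2
    rw [div_le_iff₀ (by positivity)]
    nlinarith [hA2, hB2]

lemma LX_bddAbove (t : ℝ) :
    BddAbove {r : ℝ | ∃ x y : X, (x, y) ≠ (0, 0) ∧ ‖x + y‖ = ‖x - y‖ ∧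
      r = (‖t • x + (1 - t) • y‖ ^ 2 + ‖(1 - t) • x + t • y‖ ^ 2) / ‖x + y‖ ^ 2} :=
  ⟨2 * (|t| + |1 - 2*t|)^2, fun _ hr => LX_mem_le hr⟩

lemma LX_ge_half {x₀ : X} (hx₀ : x₀ ≠ 0) (t : ℝ) : (1:ℝ)/2 ≤ LX X t := by
  have hn : (0:ℝ) < ‖x₀‖ := norm_pos_iff.mpr hx₀
  have hmem : t^2 + (1 - t)^2 ∈ {r : ℝ | ∃ x y : X, (x, y) ≠ (0, 0) ∧ ‖x + y‖ = ‖x - y‖ ∧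
      r = (‖t • x + (1 - t) • y‖ ^ 2 + ‖(1 - t) • x + t • y‖ ^ 2) / ‖x + y‖ ^ 2} := by
    refine ⟨x₀, 0, by simp [hx₀], by simp, ?_⟩
    rw [smul_zero, smul_zero, add_zero, add_zero, add_zero, norm_smul, norm_smul]
    simp only [Real.norm_eq_abs]
    rw [mul_pow, mul_pow, sq_abs, sq_abs]
    field_simp
  have h1 : t^2 + (1 - t)^2 ≤ LX X t := le_csSup (LX_bddAbove t) hmem
  nlinarith [sq_nonneg (2*t - 1)]

lemma exists_unit (X : Type*) [NormedAddCommGroup X] [NormedSpace ℝ X]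
    {x₀ : X} (hx₀ : x₀ ≠ 0) : ∃ p : X, ‖p‖ = 1 := by
  refine ⟨‖x₀‖⁻¹ • x₀, ?_⟩
  rw [norm_smul, Real.norm_eq_abs, abs_inv, abs_of_nonneg (norm_nonneg _)]
  exact inv_mul_cancel₀ (norm_ne_zero_iff.mpr hx₀)

lemma rho_mem_le {s r : ℝ} {x₀ : X} (hx₀ : x₀ ≠ 0)
    (hr : r ∈ {r : ℝ | ∃ x y : X, ‖x‖ = 1 ∧ ‖y‖ = 1 ∧
      r = (‖x + s • y‖ + ‖x - s • y‖) / 2 - 1}) :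
    r ≤ 2 * LX X ((1 - s)/2) - 1 := by
  obtain ⟨p, q, hp, hq, rfl⟩ := hr
  set t : ℝ := (1 - s)/2 with ht
  have hmem : (‖p - s • q‖^2 + ‖p + s • q‖^2) / 4 ∈
      {r : ℝ | ∃ x y : X, (x, y) ≠ (0, 0) ∧ ‖x + y‖ = ‖x - y‖ ∧
        r = (‖t • x + (1 - t) • y‖ ^ 2 + ‖(1 - t) • x + t • y‖ ^ 2) / ‖x + y‖ ^ 2} := by
    refine ⟨p + q, p - q, ?_, ?_, ?_⟩
    · intro h
      have h1 : p + q = 0 := congrArg Prod.fst h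
      have h2 : p - q = 0 := congrArg Prod.snd h
      have hp0 : p = 0 := by
        have : (2:ℝ) • p = 0 := by rw [show (2:ℝ) • p = (p + q) + (p - q) by module, h1, h2, add_zero]
        simpa using smul_eq_zero.mp this
      rw [hp0, norm_zero] at hp
      norm_num at hp
    · have e1 : (p + q) + (p - q) = (2:ℝ) • p := by module
      have e2 : (p + q) - (p - q) = (2:ℝ) • q := by module
      rw [e1, e2, norm_smul, norm_smul, hp, hq]
    · have e1 : t • (p + q) + (1 - t) • (p - q) = p - s • q := by
        rw [ht]; module
      have e2 : (1 - t) • (p + q) + t • (p - q) = p + s • q := by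
        rw [ht]; module
      have e3 : (p + q) + (p - q) = (2:ℝ) • p := by module
      rw [e1, e2, e3, norm_smul, hp]
      norm_num
  have hle : (‖p - s • q‖^2 + ‖p + s • q‖^2) / 4 ≤ LX X t := le_csSup (LX_bddAbove t) hmem
  have hhalf : (1:ℝ)/2 ≤ LX X t := LX_ge_half hx₀ t
  have ha : (0:ℝ) ≤ ‖p + s • q‖ := norm_nonneg _
  have hb : (0:ℝ) ≤ ‖p - s • q‖ := norm_nonneg _
  nlinarith [sq_nonneg (‖p + s • q‖ - ‖p - s • q‖), sq_nonneg (‖p + s • q‖ + ‖p - s • q‖ - 2)]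

lemma rho_bddAbove (s : ℝ) :
    BddAbove {r : ℝ | ∃ x y : X, ‖x‖ = 1 ∧ ‖y‖ = 1 ∧
      r = (‖x + s • y‖ + ‖x - s • y‖) / 2 - 1} := by
  refine ⟨|s|, fun r hr => ?_⟩
  obtain ⟨p, q, hp, hq, rfl⟩ := hr
  have h1 : ‖p + s • q‖ ≤ 1 + |s| := by
    calc ‖p + s • q‖ ≤ ‖p‖ + ‖s • q‖ := norm_add_le _ _
      _ = 1 + |s| := by rw [hp, norm_smul, Real.norm_eq_abs, hq, mul_one]
  have h2 : ‖p - s • q‖ ≤ 1 + |s| := by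
    calc ‖p - s • q‖ ≤ ‖p‖ + ‖s • q‖ := norm_sub_le _ _
      _ = 1 + |s| := by rw [hp, norm_smul, Real.norm_eq_abs, hq, mul_one]
  linarith

lemma rho_nonneg {x₀ : X} (hx₀ : x₀ ≠ 0) (s : ℝ) : 0 ≤ rhoX X s := by
  obtain ⟨p, hp⟩ := exists_unit X hx₀
  have hmem : (‖p + s • p‖ + ‖p - s • p‖) / 2 - 1 ∈
      {r : ℝ | ∃ x y : X, ‖x‖ = 1 ∧ ‖y‖ = 1 ∧
        r = (‖x + s • y‖ + ‖x - s • y‖) / 2 - 1} := ⟨p, p, hp, hp, rfl⟩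
  have hle := le_csSup (rho_bddAbove s) hmem
  have h2 : (2:ℝ) ≤ ‖p + s • p‖ + ‖p - s • p‖ := by
    have e : (p + s • p) + (p - s • p) = (2:ℝ) • p := by module
    have := norm_add_le (p + s • p) (p - s • p)
    rw [e, norm_smul, hp] at this
    simpa using this
  unfold rhoX
  linarith

lemma rho_le {x₀ : X} (hx₀ : x₀ ≠ 0) (s : ℝ) : rhoX X s ≤ 2 * LX X ((1 - s)/2) - 1 := by
  obtain ⟨p, hp⟩ := exists_unit X hx₀
  refine csSup_le ⟨(‖p + s • p‖ + ‖p - s • p‖) / 2 - 1, p, p, hp, hp, rfl⟩ ?_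
  exact fun r hr => rho_mem_le hx₀ hr

end aux

theorem stmt_19 (X : Type*) [NormedAddCommGroup X] [NormedSpace ℝ X] [CompleteSpace X]
    (hdim : 2 ≤ Module.rank ℝ X)
    (hL : Filter.Tendsto (fun t : ℝ => (2 * LX X t - 1) / (1 - 2 * t))
      (nhdsWithin (1 / 2 : ℝ) (Set.Iio (1 / 2))) (nhds 0)) :
    Filter.Tendsto (fun s : ℝ => rhoX X s / s)
      (nhdsWithin (0 : ℝ) (Set.Ioi 0)) (nhds 0) := by
  have hpos : 0 < Module.rank ℝ X := lt_of_lt_of_le (by norm_num) hdim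
  obtain ⟨x₀, hx₀⟩ : ∃ x : X, x ≠ 0 := by
    rw [← rank_pos_iff_exists_ne_zero (R := ℝ)]
    exact hpos
  -- the comparison function tends to 0
  have hφ : Filter.Tendsto (fun s : ℝ => (1 - s)/2)
      (nhdsWithin (0 : ℝ) (Set.Ioi 0)) (nhdsWithin (1/2 : ℝ) (Set.Iio (1/2))) := by
    apply tendsto_nhdsWithin_of_tendsto_nhds_of_eventually_within
    · have hc : Continuous fun s : ℝ => (1 - s)/2 := by continuity
      have := hc.tendsto 0
      simp only [sub_zero] at this
      exact this.mono_left nhdsWithin_le_nhds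
    · filter_upwards [self_mem_nhdsWithin] with s hs
      have : (0:ℝ) < s := hs
      simp only [Set.mem_Iio]
      linarith
  have hupper : Filter.Tendsto (fun s : ℝ => (2 * LX X ((1 - s)/2) - 1) / s)
      (nhdsWithin (0 : ℝ) (Set.Ioi 0)) (nhds 0) := by
    have := hL.comp hφ
    refine this.congr fun s => ?_
    simp only [Function.comp]
    rw [show (1 : ℝ) - 2 * ((1 - s)/2) = s by ring]
  refine tendsto_of_tendsto_of_tendsto_of_le_of_le' tendsto_const_nhds hupper ?_ ?_
  · filter_upwards [self_mem_nhdsWithin] with s hs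
    exact div_nonneg (rho_nonneg hx₀ s) (le_of_lt hs)
  · filter_upwards [self_mem_nhdsWithin] with s hs
    have hs' : (0:ℝ) < s := hs
    exact div_le_div_of_nonneg_right (rho_le hx₀ s) hs'.le
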